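/- Let V be a subspace of ℂ^n, P_V the orthogonal projection onto V, σ_V = { c Hermitian positive semidefinite : P_V c = c, tr c = 1 }, Σ_V the unit sphere of V, and m : ℂ^n → ℝ^n the map m(v) = (|v_1|²,...,|v_n|²). Then Φ(σ_V) = co(m(Σ_V)), the convex hull of the image of the unit sphere of V under m, where Φ(c) is identified with the vector of diagonal entries of c. -/

import Mathlib

open scoped ComplexOrder
open Matrix

private lemma sum_normSq_eq {n : ℕ} (v : EuclideanSpace ℂ (Fin n)) :
    ∑ i, Complex.normSq (v i) = ‖v‖ ^ 2 := by
  rw [EuclideanSpace.norm_eq, Real.sq_sqrt (by positivity)]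
  refine Finset.sum_congr rfl fun i _ => ?_
  rw [← Complex.sq_norm]

private lemma psd_rsmul {n : ℕ} {c : Matrix (Fin n) (Fin n) ℂ} (hc : c.PosSemidef)
    {a : ℝ} (ha : 0 ≤ a) : ((a : ℂ) • c).PosSemidef := by
  rw [Matrix.posSemidef_iff_dotProduct_mulVec]
  constructor
  · have := hc.1
    unfold Matrix.IsHermitian at this ⊢
    rw [Matrix.conjTranspose_smul, this]
    congr 1
    simp
  · intro x
    rw [Matrix.smul_mulVec, dotProduct_smul, smul_eq_mul]
    exact mul_nonneg (by exact_mod_cast ha) ((Matrix.posSemidef_iff_dotProduct_mulVec.1 hc).2 x)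

/-- `Φ(σ_V)` equals the convex hull of the moment image of the unit sphere of `V`. -/
theorem diag_image_eq_convexHull_moment_sphere (n : ℕ)
    (V : Submodule ℂ (EuclideanSpace ℂ (Fin n))) :
    {x : Fin n → ℝ | ∃ c : Matrix (Fin n) (Fin n) ℂ, c.PosSemidef ∧
        (∀ y : Fin n → ℂ, (WithLp.toLp 2 (c.mulVec y) : EuclideanSpace ℂ (Fin n)) ∈ V) ∧
        c.trace = 1 ∧ ∀ i, c i i = (x i : ℂ)} =
    convexHull ℝ {y : Fin n → ℝ | ∃ v ∈ V, ‖v‖ = 1 ∧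
        y = fun i => Complex.normSq (v i)} := by
  set S : Set (Fin n → ℝ) := {y : Fin n → ℝ | ∃ v ∈ V, ‖v‖ = 1 ∧
        y = fun i => Complex.normSq (v i)} with hS
  apply Set.Subset.antisymm
  · -- hard direction: spectral decomposition
    rintro x ⟨c, hpsd, hV, htr, hdiag⟩
    have hH := hpsd.1
    set B := hH.eigenvectorBasis with hB
    set w := hH.eigenvalues with hw
    have hwnn : ∀ k, 0 ≤ w k := fun k => hpsd.eigenvalues_nonneg k
    -- entrywise formula for the diagonal
    have hentry : ∀ i, c i i = ∑ k, (w k : ℂ) * (Complex.normSq (B k i) : ℂ) := by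
      intro i
      conv_lhs => rw [hH.spectral_theorem, Unitary.conjStarAlgAut_apply]
      rw [Matrix.mul_apply]
      refine Finset.sum_congr rfl fun k _ => ?_
      rw [Matrix.mul_diagonal]
      simp only [Matrix.star_apply, Matrix.IsHermitian.eigenvectorUnitary_apply,
        Function.comp_apply, RCLike.star_def]
      show B k i * (w k : ℂ) * (starRingEnd ℂ) (B k i) = _
      rw [mul_comm (B k i), mul_assoc, Complex.mul_conj]
    have hx : ∀ i, x i = ∑ k, w k * Complex.normSq (B k i) := by
      intro i
      have h := (hdiag i).symm.trans (hentry i)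
      exact_mod_cast h
    have hnorm1 : ∀ k, ‖(B k : EuclideanSpace ℂ (Fin n))‖ = 1 :=
      fun k => B.orthonormal.1 k
    have hsum : ∑ k, w k = 1 := by
      have h1 : (∑ i, x i) = 1 := by
        have ht : c.trace = ((∑ i, x i : ℝ) : ℂ) := by
          rw [Matrix.trace]
          push_cast
          exact Finset.sum_congr rfl fun i _ => hdiag i
        rw [htr] at ht
        exact_mod_cast ht.symm
      calc ∑ k, w k = ∑ k, w k * ∑ i, Complex.normSq (B k i) := by
            refine Finset.sum_congr rfl fun k _ => ?_
            rw [sum_normSq_eq, hnorm1 k]; norm_num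
        _ = ∑ i, ∑ k, w k * Complex.normSq (B k i) := by
            simp_rw [Finset.mul_sum]; exact Finset.sum_comm
        _ = ∑ i, x i := by simp_rw [← hx]
        _ = 1 := h1
    set t := Finset.univ.filter (fun k => w k ≠ 0) with ht
    set z : Fin n → (Fin n → ℝ) := fun k i => Complex.normSq (B k i) with hz
    have hsum_t : ∑ k ∈ t, w k = 1 := by
      rw [ht, Finset.sum_filter_ne_zero]; exact hsum
    have hzS : ∀ k ∈ t, z k ∈ S := by
      intro k hk
      have hk0 : w k ≠ 0 := (Finset.mem_filter.1 hk).2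
      have hmem : ((w k : ℂ) • (B k : EuclideanSpace ℂ (Fin n))) ∈ V := by
        have h1 := hV (B k).ofLp
        have h2 : c.mulVec (B k) = w k • (B k : Fin n → ℂ) :=
          hH.mulVec_eigenvectorBasis k
        rw [h2] at h1
        convert h1 using 1
        rw [WithLp.toLp_smul, WithLp.toLp_ofLp]
        exact (RCLike.real_smul_eq_coe_smul (K := ℂ) _ _).symm
      have hBk : (B k : EuclideanSpace ℂ (Fin n)) ∈ V := by
        have h3 := V.smul_mem ((w k : ℂ)⁻¹) hmem
        rwa [smul_smul, inv_mul_cancel₀ (by exact_mod_cast hk0), one_smul] at h3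
      exact ⟨B k, hBk, hnorm1 k, rfl⟩
    have hcm : t.centerMass w z ∈ convexHull ℝ S := by
      refine Finset.centerMass_mem_convexHull t (fun k _ => hwnn k) ?_ hzS
      rw [hsum_t]; norm_num
    have hxeq : t.centerMass w z = x := by
      rw [Finset.centerMass, hsum_t, inv_one, one_smul]
      have : ∑ k ∈ t, w k • z k = ∑ k, w k • z k := by
        rw [ht]
        refine Finset.sum_filter_of_ne fun k _ hne => ?_
        intro h0
        rw [h0, zero_smul] at hne
        exact hne rfl
      rw [this]
      funext i
      rw [Finset.sum_apply]
      simp only [Pi.smul_apply, smul_eq_mul, hz]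
      exact (hx i).symm
    rwa [hxeq] at hcm
  · -- easy direction: convexHull_min
    apply convexHull_min
    · rintro y ⟨v, hvV, hv1, rfl⟩
      have hmv : ∀ y0 : Fin n → ℂ,
          Matrix.vecMulVec (⇑v) (star ⇑v) *ᵥ y0 = (star ⇑v ⬝ᵥ y0) • ⇑v := by
        intro y0
        funext i
        simp only [Matrix.mulVec, dotProduct, Matrix.vecMulVec_apply, Pi.smul_apply,
          smul_eq_mul, Pi.star_apply, Finset.sum_mul]
        exact Finset.sum_congr rfl fun j _ => by ring
      refine ⟨Matrix.vecMulVec (⇑v) (star ⇑v), ?_, ?_, ?_, ?_⟩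
      · rw [Matrix.posSemidef_iff_dotProduct_mulVec]
        constructor
        · ext i j
          simp only [Matrix.conjTranspose_apply, Matrix.vecMulVec_apply, Pi.star_apply,
            star_mul', star_star]
          ring
        · intro y0
          rw [hmv, dotProduct_smul, smul_eq_mul, mul_comm]
          have : star y0 ⬝ᵥ ⇑v = star (star ⇑v ⬝ᵥ y0) := by
            simp [dotProduct, mul_comm]
          rw [this]
          exact star_mul_self_nonneg _
      · intro y0
        rw [hmv y0, WithLp.toLp_smul, WithLp.toLp_ofLp]
        exact V.smul_mem _ hvV
      · rw [Matrix.trace]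
        simp only [Matrix.diag_apply, Matrix.vecMulVec_apply, Pi.star_apply, RCLike.star_def,
          Complex.mul_conj]
        rw [← Complex.ofReal_sum]
        norm_cast
        show (∑ i, Complex.normSq (v i)) = 1
        rw [sum_normSq_eq v, hv1]; norm_num
      · intro i
        simp [Matrix.vecMulVec_apply, Complex.mul_conj]
    · intro p hp q hq a b ha hb hab
      obtain ⟨c, hc, hcV, hctr, hcd⟩ := hp
      obtain ⟨d, hd, hdV, hdtr, hdd⟩ := hq
      refine ⟨(a : ℂ) • c + (b : ℂ) • d, (psd_rsmul hc ha).add (psd_rsmul hd hb), ?_, ?_, ?_⟩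
      · intro y0
        have h5 : ((a : ℂ) • c + (b : ℂ) • d) *ᵥ y0 =
            (a : ℂ) • (c *ᵥ y0) + (b : ℂ) • (d *ᵥ y0) := by
          rw [Matrix.add_mulVec, Matrix.smul_mulVec, Matrix.smul_mulVec]
        rw [h5, WithLp.toLp_add, WithLp.toLp_smul, WithLp.toLp_smul]
        exact V.add_mem (V.smul_mem _ (hcV y0)) (V.smul_mem _ (hdV y0))
      · rw [Matrix.trace_add, Matrix.trace_smul, Matrix.trace_smul, hctr, hdtr]
        simp only [smul_eq_mul, mul_one]
        exact_mod_cast congrArg (Complex.ofReal) hab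
      · intro i
        simp only [Matrix.add_apply, Matrix.smul_apply, hcd i, hdd i, smul_eq_mul,
          Pi.add_apply, Pi.smul_apply]
        push_cast
        ring
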